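/- For a > 0 real (or complex with Re(a) > 0) and integer n ≥ 1, the Fourier transform (with kernel e^{+i k x}) of the function x ↦ L_{n-1}(2 a x) e^{-a x} on [0, ∞) (extended by zero for x < 0) equals i · (k - i a)^{n-1} / (k + i a)^{n}, where L_m denotes the Laguerre polynomial of degree m. -/

import Mathlib

open MeasureTheory Complex Set Filter Asymptotics
open scoped Topology

/-- Laguerre polynomials (complex argument), via the standard three-term recurrence. -/
noncomputable def laguerre : ℕ → ℂ → ℂ
  | 0, _ => 1
  | 1, x => 1 - x
  | n + 2, x => ((2 * (n : ℂ) + 3 - x) * laguerre (n + 1) x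
      - ((n : ℂ) + 1) * laguerre n x) / ((n : ℂ) + 2)


lemma tendsto_pow_mul_exp_real {b : ℝ} (hb : 0 < b) (j : ℕ) :
    Tendsto (fun x : ℝ => x ^ j * Real.exp (-b * x)) atTop (𝓝 0) := by
  have h1 : Tendsto (fun x : ℝ => (b * x) ^ j * Real.exp (-(b * x))) atTop (𝓝 0) :=
    (Real.tendsto_pow_mul_exp_neg_atTop_nhds_zero j).comp (tendsto_id.const_mul_atTop hb)
  have h2 := h1.const_mul ((1 : ℝ) / b ^ j)
  rw [mul_zero] at h2
  refine h2.congr (fun x => ?_)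
  have hbj : (b : ℝ) ^ j ≠ 0 := pow_ne_zero _ hb.ne'
  field_simp [mul_pow]
  ring

lemma tendsto_pow_mul_cexp {c : ℂ} (hc : 0 < c.re) (j : ℕ) :
    Tendsto (fun x : ℝ => (x : ℂ) ^ j * Complex.exp (-c * x)) atTop (𝓝 0) := by
  refine squeeze_zero_norm' ?_ (tendsto_pow_mul_exp_real hc j)
  filter_upwards [eventually_ge_atTop (0 : ℝ)] with x hx
  have : ‖(x : ℂ) ^ j * Complex.exp (-c * x)‖ = |x| ^ j * Real.exp (-c.re * x) := by
    simp [Complex.norm_exp]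
  rw [this, _root_.abs_of_nonneg hx]

lemma integrableOn_pow_mul_cexp {c : ℂ} (hc : 0 < c.re) (j : ℕ) :
    IntegrableOn (fun x : ℝ => (x : ℂ) ^ j * Complex.exp (-c * x)) (Ioi 0) := by
  have hcont : ContinuousOn (fun x : ℝ => (x : ℂ) ^ j * Complex.exp (-c * x)) (Ici 0) :=
    (Continuous.mul (by continuity) (by continuity)).continuousOn
  have hb2 : (0 : ℝ) < c.re / 2 := by linarith
  have hO : (fun x : ℝ => (x : ℂ) ^ j * Complex.exp (-c * x)) =O[atTop]
      fun x : ℝ => Real.exp (-(c.re / 2) * x) := by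
    refine IsBigO.of_bound 1 ?_
    have ht : Tendsto (fun x : ℝ => x ^ j * Real.exp (-(c.re / 2) * x)) atTop (𝓝 0) :=
      tendsto_pow_mul_exp_real hb2 j
    filter_upwards [eventually_ge_atTop (0 : ℝ),
      ht.eventually_le_const (by norm_num : (0:ℝ) < 1)] with x hx hle
    have h1 : ‖(x : ℂ) ^ j * Complex.exp (-c * x)‖ = x ^ j * Real.exp (-c.re * x) := by
      simp [Complex.norm_exp, _root_.abs_of_nonneg hx]
    rw [h1, one_mul, Real.norm_eq_abs, abs_of_pos (Real.exp_pos _)]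
    have : Real.exp (-c.re * x) = Real.exp (-(c.re/2) * x) * Real.exp (-(c.re/2) * x) := by
      rw [← Real.exp_add]; ring_nf
    rw [this, ← mul_assoc]
    calc x ^ j * Real.exp (-(c.re/2) * x) * Real.exp (-(c.re/2) * x)
        ≤ 1 * Real.exp (-(c.re/2) * x) := by
          apply mul_le_mul_of_nonneg_right hle (Real.exp_pos _).le
      _ = Real.exp (-(c.re/2) * x) := one_mul _
  exact Iff.mp integrableOn_Ici_iff_integrableOn_Ioi <|
    (hcont.locallyIntegrableOn measurableSet_Ici).integrableOn_of_isBigO_atTop hO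
      ⟨Ioi 0, Ioi_mem_atTop 0, exp_neg_integrableOn_Ioi 0 hb2⟩



lemma cexp_hasDerivAt (c : ℂ) (x : ℝ) :
    HasDerivAt (fun y : ℝ => Complex.exp (-c * y)) (-c * Complex.exp (-c * x)) x := by
  have h : HasDerivAt (fun z : ℂ => Complex.exp (-c * z)) (-c * Complex.exp (-c * x)) (x : ℂ) := by
    simpa [mul_comm] using ((hasDerivAt_id (x : ℂ)).const_mul (-c)).cexp
  exact h.comp_ofReal

lemma integral_cexp {c : ℂ} (hc : 0 < c.re) :
    ∫ x in Ioi (0 : ℝ), Complex.exp (-c * x) = 1 / c := by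
  have hcne : c ≠ 0 := fun h => by simp [h] at hc
  have := integral_Ioi_of_hasDerivAt_of_tendsto
    (f := fun x : ℝ => -Complex.exp (-c * x) / c) (f' := fun x : ℝ => Complex.exp (-c * x))
    (a := 0) (m := 0) ?_ ?_ ?_ ?_
  · rw [this]; simp [neg_div]
  · exact (Continuous.continuousWithinAt (by continuity))
  · intro x _
    have := ((cexp_hasDerivAt c x).neg).div_const c
    refine this.congr_deriv ?_
    rw [neg_mul, neg_neg, mul_div_right_comm, div_self hcne, one_mul]
  · simpa using integrableOn_pow_mul_cexp hc 0
  · have := (tendsto_pow_mul_cexp hc 0).neg.div_const c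
    simpa using this

lemma integral_pow_mul_cexp {c : ℂ} (hc : 0 < c.re) (j : ℕ) :
    ∫ x in Ioi (0 : ℝ), (x : ℂ) ^ j * Complex.exp (-c * x) = (j.factorial : ℂ) / c ^ (j + 1) := by
  have hcne : c ≠ 0 := fun h => by simp [h] at hc
  induction j with
  | zero => simpa using integral_cexp hc
  | succ j ih =>
    have key : ∫ x in Ioi (0 : ℝ),
        (c * ((x : ℂ) ^ (j + 1) * Complex.exp (-c * x))
          - ((j : ℂ) + 1) * ((x : ℂ) ^ j * Complex.exp (-c * x))) = 0 := by
      have := integral_Ioi_of_hasDerivAt_of_tendsto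
        (f := fun x : ℝ => -((x : ℂ) ^ (j + 1) * Complex.exp (-c * x)))
        (f' := fun x : ℝ => c * ((x : ℂ) ^ (j + 1) * Complex.exp (-c * x))
          - ((j : ℂ) + 1) * ((x : ℂ) ^ j * Complex.exp (-c * x)))
        (a := 0) (m := 0) ?_ ?_ ?_ ?_
      · simpa using this
      · exact (Continuous.continuousWithinAt (by continuity))
      · intro x _
        have hp : HasDerivAt (fun y : ℝ => ((y : ℂ)) ^ (j + 1))
            (((j : ℂ) + 1) * (x : ℂ) ^ j) x := by
          have := (hasDerivAt_pow (j + 1) ((x : ℂ))).comp_ofReal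
          simpa [Nat.cast_add] using this
        have := (hp.mul (cexp_hasDerivAt c x)).neg
        convert this using 1
        · rfl
        ring
      · exact ((integrableOn_pow_mul_cexp hc (j + 1)).const_mul c).sub
          ((integrableOn_pow_mul_cexp hc j).const_mul _)
      · simpa using (tendsto_pow_mul_cexp hc (j + 1)).neg
    rw [integral_sub ((integrableOn_pow_mul_cexp hc (j + 1)).const_mul c)
        ((integrableOn_pow_mul_cexp hc j).const_mul _),
      integral_const_mul, integral_const_mul, ih, sub_eq_zero] at key
    apply mul_left_cancel₀ hcne
    rw [key, Nat.factorial_succ]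
    have hc2 : c ^ (j + 1) ≠ 0 := pow_ne_zero _ hcne
    have hc3 : c ^ (j + 2) ≠ 0 := pow_ne_zero _ hcne
    field_simp
    -- cast
    push_cast
    ring



lemma choose_key (m k : ℕ) :
    ((m : ℂ) + 2) * ((m + 2).choose (k + 1)) + ((m : ℂ) + 1) * (m.choose (k + 1))
      = (2 * (m : ℂ) + 3) * ((m + 1).choose (k + 1)) + ((k : ℂ) + 1) * ((m + 1).choose k) := by
  have p1 : ((m + 2).choose (k + 1) : ℂ) = (m + 1).choose (k + 1) + (m + 1).choose k := by
    rw [Nat.choose_succ_succ (m + 1) k]; push_cast; ring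
  have p2 : (((m + 1)).choose (k + 1) : ℂ) = m.choose (k + 1) + m.choose k := by
    rw [Nat.choose_succ_succ m k]; push_cast; ring
  rcases le_or_gt k m with hk | hk
  · -- (m+1-k) * C(m+1,k) = (m+1) * C(m,k)
    have h := Nat.choose_mul_succ_eq m k
    have h' : ((m.choose k : ℂ)) * (m + 1) = ((m + 1).choose k : ℂ) * ((m : ℂ) + 1 - k) := by
      have : ((m + 1 - k : ℕ) : ℂ) = (m : ℂ) + 1 - k := by
        push_cast [Nat.cast_sub (by omega : k ≤ m + 1)]; ring
      calc ((m.choose k : ℂ)) * (m + 1) = ((m.choose k * (m + 1) : ℕ) : ℂ) := by push_cast; ring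
        _ = (((m + 1).choose k * (m + 1 - k) : ℕ) : ℂ) := by rw [h]
        _ = ((m + 1).choose k : ℂ) * ((m : ℂ) + 1 - k) := by push_cast [this]; ring
    rw [p1, p2]
    linear_combination -h'
  · rcases eq_or_lt_of_le (Nat.succ_le_of_lt hk) with hk1 | hk1
    · -- k = m + 1
      have hb : m.choose (k + 1) = 0 := Nat.choose_eq_zero_of_lt (by omega)
      have hb2 : m.choose k = 0 := Nat.choose_eq_zero_of_lt (by omega)
      have hk' : k = m + 1 := by omega
      rw [p1, p2, hb, hb2, hk']
      push_cast
      ring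
    · -- k ≥ m + 2
      have h1 : m.choose (k + 1) = 0 := Nat.choose_eq_zero_of_lt (by omega)
      have h2 : m.choose k = 0 := Nat.choose_eq_zero_of_lt (by omega)
      have h3 : (m + 1).choose k = 0 := Nat.choose_eq_zero_of_lt (by omega)
      rw [p1, p2, h1, h2, h3]
      push_cast
      ring

lemma laguerre_eq (m : ℕ) (x : ℂ) :
    laguerre m x = ∑ j ∈ Finset.range (m + 1),
      (m.choose j : ℂ) * (-x) ^ j / (j.factorial : ℂ) := by
  induction m using Nat.strong_induction_on with
  | _ m ih =>
    match m with
    | 0 => simp [laguerre]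
    | 1 => simp [laguerre, Finset.sum_range_succ]; ring
    | (m + 2) =>
      have ih1 := ih (m + 1) (by omega)
      have ih0 := ih m (by omega)
      have hm2 : ((m : ℂ) + 2) ≠ 0 := by
        have h : ((m + 2 : ℕ) : ℂ) ≠ 0 := Nat.cast_ne_zero.mpr (by omega)
        push_cast at h
        exact h
      rw [laguerre, ih1, ih0, div_eq_iff hm2]
      -- extend all sums to range (m+3)
      have e0 : ∑ j ∈ Finset.range (m + 1), (m.choose j : ℂ) * (-x) ^ j / (j.factorial : ℂ)
          = ∑ j ∈ Finset.range (m + 3), (m.choose j : ℂ) * (-x) ^ j / (j.factorial : ℂ) := by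
        refine Finset.sum_subset (Finset.range_subset_range.mpr (by omega)) (fun j hj hnj => ?_)
        rw [Nat.choose_eq_zero_of_lt (by simp only [Finset.mem_range] at hj hnj; omega)]
        simp
      have e1 : ∑ j ∈ Finset.range (m + 2), ((m+1).choose j : ℂ) * (-x) ^ j / (j.factorial : ℂ)
          = ∑ j ∈ Finset.range (m + 3), ((m+1).choose j : ℂ) * (-x) ^ j / (j.factorial : ℂ) := by
        refine Finset.sum_subset (Finset.range_subset_range.mpr (by omega)) (fun j hj hnj => ?_)
        rw [Nat.choose_eq_zero_of_lt (by simp only [Finset.mem_range] at hj hnj; omega)]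
        simp
      -- -x * S(m+1) as a sum over range (m+3)
      have e2 : (-x) * ∑ j ∈ Finset.range (m + 2),
            ((m+1).choose j : ℂ) * (-x) ^ j / (j.factorial : ℂ)
          = ∑ j ∈ Finset.range (m + 3),
            (j : ℂ) * ((m+1).choose (j - 1) : ℂ) * (-x) ^ j / (j.factorial : ℂ) := by
        rw [Finset.sum_range_succ' (fun j => (j : ℂ) * ((m+1).choose (j - 1) : ℂ)
            * (-x) ^ j / (j.factorial : ℂ)) (m + 2)]
        rw [Finset.mul_sum]
        simp only [Nat.cast_zero, zero_mul, Nat.add_sub_cancel, zero_div, add_zero,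
          Nat.succ_sub_one]
        refine Finset.sum_congr rfl (fun i _ => ?_)
        have hf : ((i + 1).factorial : ℂ) = ((i : ℂ) + 1) * (i.factorial : ℂ) := by
          rw [Nat.factorial_succ]; push_cast; ring
        have hfne : (i.factorial : ℂ) ≠ 0 := Nat.cast_ne_zero.mpr i.factorial_ne_zero
        have hi1 : ((i : ℂ) + 1) ≠ 0 := Nat.cast_add_one_ne_zero i
        rw [hf]
        push_cast
        field_simp
        ring
      have hsum : ((m : ℂ) + 2) * (∑ j ∈ Finset.range (m + 3),
              ((m+2).choose j : ℂ) * (-x) ^ j / (j.factorial : ℂ))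
            + ((m : ℂ) + 1) * (∑ j ∈ Finset.range (m + 3),
              (m.choose j : ℂ) * (-x) ^ j / (j.factorial : ℂ))
          = (2 * (m : ℂ) + 3) * (∑ j ∈ Finset.range (m + 3),
              ((m+1).choose j : ℂ) * (-x) ^ j / (j.factorial : ℂ))
            + ∑ j ∈ Finset.range (m + 3),
              (j : ℂ) * ((m+1).choose (j - 1) : ℂ) * (-x) ^ j / (j.factorial : ℂ) := by
        rw [Finset.mul_sum, Finset.mul_sum, Finset.mul_sum, ← Finset.sum_add_distrib,
          ← Finset.sum_add_distrib]
        refine Finset.sum_congr rfl (fun j _ => ?_)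
        match j with
        | 0 => simp; ring
        | (k + 1) =>
          have hck := choose_key m k
          have : ((k + 1 : ℕ) : ℂ) = (k : ℂ) + 1 := by push_cast; ring
          rw [Nat.add_sub_cancel, this]
          linear_combination hck * ((-x) ^ (k + 1) / ((k + 1).factorial : ℂ))
      linear_combination e2 + (2 * (m : ℂ) + 3) * e1 - ((m : ℂ) + 1) * e0 - hsum


/-- Fourier transform (kernel `e^{+ikx}`) of `x ↦ L_{n-1}(2ax) e^{-ax}` on `[0,∞)`. -/
theorem stmt_0 (a : ℂ) (ha : 0 < a.re) (n : ℕ) (hn : 1 ≤ n) (k : ℝ) :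
    ∫ x in Set.Ioi (0 : ℝ),
        laguerre (n - 1) (2 * a * x) * Complex.exp (-a * x) * Complex.exp (I * k * x)
      = I * ((k : ℂ) - I * a) ^ (n - 1) / ((k : ℂ) + I * a) ^ n := by
  obtain ⟨m, rfl⟩ : ∃ m, n = m + 1 := ⟨n - 1, by omega⟩
  simp only [Nat.add_sub_cancel]
  set c : ℂ := a - I * k with hc_def
  have hc : 0 < c.re := by
    have : c.re = a.re := by simp [hc_def]
    rw [this]; exact ha
  have hcne : c ≠ 0 := fun h => by rw [h] at hc; simp at hc
  have hfun : (fun x : ℝ => laguerre m (2 * a * x) * Complex.exp (-a * x)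
        * Complex.exp (I * k * x))
      = fun x : ℝ => ∑ j ∈ Finset.range (m + 1),
        ((m.choose j : ℂ) * (-2 * a) ^ j / (j.factorial : ℂ))
          * ((x : ℂ) ^ j * Complex.exp (-c * x)) := by
    funext x
    rw [laguerre_eq, Finset.sum_mul, Finset.sum_mul]
    refine Finset.sum_congr rfl fun j _ => ?_
    rw [mul_assoc, ← Complex.exp_add]
    have he : -a * (x : ℂ) + I * k * x = -c * x := by rw [hc_def]; ring
    rw [he, show -(2 * a * (x : ℂ)) = (-2 * a) * x by ring, mul_pow]
    ring
  rw [hfun, integral_finset_sum _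
    (fun j _ => ((integrableOn_pow_mul_cexp hc j).const_mul _))]
  have hterm : ∀ j ∈ Finset.range (m + 1),
      (∫ x in Ioi (0 : ℝ), ((m.choose j : ℂ) * (-2 * a) ^ j / (j.factorial : ℂ))
        * ((x : ℂ) ^ j * Complex.exp (-c * x)))
      = (-2 * a) ^ j * c ^ (m - j) * (m.choose j : ℂ) / c ^ (m + 1) := by
    intro j hj
    have hj' : j ≤ m := Nat.lt_succ_iff.mp (Finset.mem_range.mp hj)
    rw [MeasureTheory.integral_const_mul, integral_pow_mul_cexp hc j]
    have hfne : (j.factorial : ℂ) ≠ 0 := Nat.cast_ne_zero.mpr j.factorial_ne_zero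
    have hpow : c ^ (m + 1) = c ^ (j + 1) * c ^ (m - j) := by
      rw [← pow_add]; congr 1; omega
    rw [hpow]
    field_simp [hfne]
  rw [Finset.sum_congr rfl hterm, ← Finset.sum_div]
  have binom : (∑ j ∈ Finset.range (m + 1),
      (-2 * a) ^ j * c ^ (m - j) * (m.choose j : ℂ)) = (c - 2 * a) ^ m := by
    rw [show c - 2 * a = -2 * a + c by ring, add_pow]
  rw [binom]
  have h1 : (k : ℂ) - I * a = I * (c - 2 * a) := by
    rw [hc_def]; linear_combination (k : ℂ) * Complex.I_sq
  have h2 : (k : ℂ) + I * a = I * c := by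
    rw [hc_def]; linear_combination (k : ℂ) * Complex.I_sq
  rw [h1, h2, mul_pow, mul_pow]
  rw [div_eq_div_iff (pow_ne_zero _ hcne)
    (mul_ne_zero (pow_ne_zero _ Complex.I_ne_zero) (pow_ne_zero _ hcne))]
  rw [pow_succ I m]
  ring
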